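/- Let a : ℚ_p^n → ℝ be nonnegative, even, integrable with ∫ a = 1, and set A_j = sup_{‖x‖=p^j} a(x). Then for every ξ with ‖ξ‖ = p^{−N}, N ≥ 0, one has 0 ≤ 1 − â(ξ) ≤ ∑_{j=N+1}^∞ p^{jn} A_j, where â(ξ) = ∫ χ(ξ·x) a(x) d^n x. -/

import Mathlib

open MeasureTheory
open scoped ENNReal

/-- The `p`-adic fractional part `{x}_p`. -/
noncomputable def pFract (p : ℕ) [Fact p.Prime] (x : ℚ_[p]) : ℚ :=
  Classical.epsilon fun r : ℚ =>
    0 ≤ r ∧ r < 1 ∧ (∃ m k : ℕ, r = (m : ℚ) / (p : ℚ) ^ k) ∧ ‖x - (r : ℚ_[p])‖ ≤ 1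

/-- The standard additive character `χ(x) = exp(2πi {x}_p)` of `ℚ_p`. -/
noncomputable def padicChar (p : ℕ) [Fact p.Prime] (x : ℚ_[p]) : ℂ :=
  Complex.exp (2 * Real.pi * Complex.I * ((pFract p x : ℚ) : ℂ))

section CharSec
variable {p : ℕ} [Fact p.Prime]

lemma MyAux.hp1 : (1:ℝ) < p := by exact_mod_cast (Fact.out : p.Prime).one_lt
lemma MyAux.hpposR : (0:ℝ) < p := lt_trans one_pos MyAux.hp1
lemma MyAux.hp0R : (p:ℝ) ≠ 0 := ne_of_gt MyAux.hpposR
lemma MyAux.hp0Q : (p:ℚ) ≠ 0 := by exact_mod_cast (Fact.out : p.Prime).ne_zero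
lemma MyAux.hp0P : ((p:ℚ_[p])) ≠ 0 := by
  exact_mod_cast (Nat.cast_ne_zero (R := ℚ_[p])).2 (Fact.out : p.Prime).ne_zero
lemma MyAux.inv_pow_eq (k : ℕ) : ((p:ℝ)⁻¹)^k = (p:ℝ)^(-(k:ℤ)) := by
  rw [inv_pow, ← zpow_natCast, ← zpow_neg]

lemma MyAux.pFract_exists (x : ℚ_[p]) :
    ∃ r : ℚ, 0 ≤ r ∧ r < 1 ∧ (∃ m k : ℕ, r = (m : ℚ) / (p : ℚ) ^ k) ∧ ‖x - (r : ℚ_[p])‖ ≤ 1 := by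
  obtain ⟨k, hk⟩ := pow_unbounded_of_one_lt ‖x‖ (MyAux.hp1 (p := p))
  have hpk : ‖((p:ℚ_[p]))^k * x‖ ≤ 1 := by
    rw [norm_mul, norm_pow, Padic.norm_p]
    calc (↑p)⁻¹ ^ k * ‖x‖ ≤ (↑p)⁻¹ ^ k * (p:ℝ)^k := by
          gcongr
      _ = 1 := by
          rw [← mul_pow, inv_mul_cancel₀ (MyAux.hp0R (p := p)), one_pow]
  set y : ℤ_[p] := ⟨(p:ℚ_[p])^k * x, hpk⟩ with hy
  refine ⟨(y.appr k : ℚ) / (p:ℚ)^k, by positivity, ?_, ⟨y.appr k, k, rfl⟩, ?_⟩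
  · rw [div_lt_one (by exact_mod_cast pow_pos (lt_trans one_pos ((Fact.out : p.Prime).one_lt)) k)]
    exact_mod_cast PadicInt.appr_lt y k
  · have hspec := PadicInt.appr_spec k y
    rw [Ideal.mem_span_singleton] at hspec
    obtain ⟨c, hc⟩ := hspec
    have hnorm : ‖y - (y.appr k : ℤ_[p])‖ ≤ (p:ℝ)^(-(k:ℤ)) := by
      rw [hc, norm_mul]
      calc ‖((p:ℤ_[p]))^k‖ * ‖c‖ ≤ ‖((p:ℤ_[p]))^k‖ * 1 := by gcongr; exact c.2
        _ = (p:ℝ)^(-(k:ℤ)) := by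
            rw [mul_one, PadicInt.norm_p_pow]
    have key : x - (((y.appr k : ℚ) / (p:ℚ)^k : ℚ) : ℚ_[p])
        = ((p:ℚ_[p])^k)⁻¹ * ((y : ℚ_[p]) - (y.appr k : ℚ_[p])) := by
      have hpne : ((p:ℚ_[p]))^k ≠ 0 := pow_ne_zero _ (MyAux.hp0P (p := p))
      have hyv : ((y : ℚ_[p])) = (p:ℚ_[p])^k * x := rfl
      rw [hyv, mul_sub, ← mul_assoc, inv_mul_cancel₀ hpne, one_mul]; push_cast; ring
    rw [key, norm_mul, norm_inv, norm_pow, Padic.norm_p]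
    have : ‖(y:ℚ_[p]) - (y.appr k : ℚ_[p])‖ ≤ (p:ℝ)^(-(k:ℤ)) := by
      have := hnorm
      rwa [← PadicInt.padic_norm_e_of_padicInt, PadicInt.coe_sub, PadicInt.coe_natCast] at this
    calc ((↑p)⁻¹^k)⁻¹ * ‖(y:ℚ_[p]) - (y.appr k : ℚ_[p])‖
        ≤ ((↑p:ℝ)⁻¹^k)⁻¹ * (p:ℝ)^(-(k:ℤ)) := by gcongr
      _ = 1 := by
          rw [MyAux.inv_pow_eq (p := p)]
          exact inv_mul_cancel₀ (zpow_ne_zero _ (MyAux.hp0R (p := p)))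

lemma MyAux.rat_int_of_norm_le_one (r : ℚ) (K : ℕ) (t : ℤ) (h : r * (p:ℚ)^K = t)
    (hn : ‖((r : ℚ) : ℚ_[p])‖ ≤ 1) : ∃ z : ℤ, r = (z : ℚ) := by
  induction K generalizing r t with
  | zero => exact ⟨t, by simpa using h⟩
  | succ K ih =>
    have hp0 : (p:ℚ) ≠ 0 := MyAux.hp0Q (p := p)
    have hs : (r * p) * (p:ℚ)^K = t := by rw [← h]; ring
    have hsn : ‖(((r * p : ℚ)) : ℚ_[p])‖ ≤ (p:ℝ)⁻¹ := by
      push_cast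
      rw [norm_mul, Padic.norm_p]
      calc ‖((r:ℚ):ℚ_[p])‖ * (↑p)⁻¹ ≤ 1 * (↑p:ℝ)⁻¹ := by gcongr
        _ = (↑p:ℝ)⁻¹ := one_mul _
    have hpinv : (p:ℝ)⁻¹ ≤ 1 := by
      rw [inv_le_one_iff₀]; right; exact MyAux.hp1.le
    obtain ⟨z, hz⟩ := ih (r * p) t hs (hsn.trans hpinv)
    have hzn : ‖((z:ℤ) : ℚ_[p])‖ < 1 := by
      calc ‖((z:ℤ) : ℚ_[p])‖ = ‖(((r * p : ℚ)) : ℚ_[p])‖ := by rw [hz]; push_cast; ring_nf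
        _ ≤ (p:ℝ)⁻¹ := hsn
        _ < 1 := by rw [inv_lt_one_iff₀]; right; exact MyAux.hp1
    obtain ⟨w, hw⟩ := (Padic.norm_intCast_lt_one_iff (k := z)).1 hzn
    refine ⟨w, mul_right_cancel₀ hp0 ?_⟩
    calc r * (p:ℚ) = ((z:ℤ):ℚ) := hz
      _ = (w:ℚ) * p := by rw [hw]; push_cast; ring

lemma MyAux.pFract_spec (x : ℚ_[p]) :
    0 ≤ pFract p x ∧ pFract p x < 1 ∧ (∃ m k : ℕ, pFract p x = (m : ℚ) / (p : ℚ) ^ k) ∧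
      ‖x - ((pFract p x : ℚ) : ℚ_[p])‖ ≤ 1 :=
  Classical.epsilon_spec (MyAux.pFract_exists x)

lemma MyAux.pFract_norm_le (x : ℚ_[p]) : ‖x - ((pFract p x : ℚ) : ℚ_[p])‖ ≤ 1 :=
  (MyAux.pFract_spec x).2.2.2

lemma MyAux.pFract_int_of (x : ℚ_[p]) (h : ‖x‖ ≤ 1) : pFract p x = 0 := by
  obtain ⟨h0, h1, ⟨m, k, hmk⟩, hn⟩ := MyAux.pFract_spec x
  set r := pFract p x
  have hrn : ‖((r:ℚ) : ℚ_[p])‖ ≤ 1 := by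
    have : ((r:ℚ) : ℚ_[p]) = x + (((r:ℚ):ℚ_[p]) - x) := by ring
    rw [this]
    refine (Padic.nonarchimedean _ _).trans (max_le h ?_)
    rwa [norm_sub_rev] at hn
  have hmul : r * (p:ℚ)^k = ((m:ℤ) : ℚ) := by
    rw [hmk, div_mul_cancel₀ _ (pow_ne_zero _ (MyAux.hp0Q (p := p)))]; simp
  obtain ⟨z, hz⟩ := MyAux.rat_int_of_norm_le_one r k m hmul hrn
  have : z = 0 := by
    rw [hz] at h0 h1
    exact_mod_cast le_antisymm (by exact_mod_cast Int.lt_add_one_iff.1 (by exact_mod_cast h1))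
      (by exact_mod_cast h0)
  rw [hz, this, Int.cast_zero]

lemma padicChar_eq_one {x : ℚ_[p]} (h : ‖x‖ ≤ 1) : padicChar p x = 1 := by
  rw [padicChar, MyAux.pFract_int_of x h]
  simp

lemma padicChar_add (x y : ℚ_[p]) :
    padicChar p (x + y) = padicChar p x * padicChar p y := by
  obtain ⟨h10, h11, ⟨m1, k1, hm1⟩, hn1⟩ := MyAux.pFract_spec x
  obtain ⟨h20, h21, ⟨m2, k2, hm2⟩, hn2⟩ := MyAux.pFract_spec y
  obtain ⟨h30, h31, ⟨m3, k3, hm3⟩, hn3⟩ := MyAux.pFract_spec (x + y)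
  set r1 := pFract p x; set r2 := pFract p y; set r3 := pFract p (x + y)
  set s : ℚ := r1 + r2 - r3 with hs
  have hsn : ‖((s:ℚ) : ℚ_[p])‖ ≤ 1 := by
    have hrepr : ((s:ℚ) : ℚ_[p])
        = (((r1:ℚ):ℚ_[p]) - x) + ((((r2:ℚ):ℚ_[p]) - y) + ((x + y) - ((r3:ℚ):ℚ_[p]))) := by
      push_cast [hs]; ring
    rw [hrepr]
    refine (Padic.nonarchimedean _ _).trans (max_le ?_ ?_)
    · rwa [norm_sub_rev] at hn1
    refine (Padic.nonarchimedean _ _).trans (max_le ?_ hn3)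
    · rwa [norm_sub_rev] at hn2
  have hmul : s * (p:ℚ)^(k1+k2+k3)
      = (((m1 : ℤ) * p^(k2+k3) + (m2:ℤ) * p^(k1+k3) - (m3:ℤ) * p^(k1+k2) : ℤ) : ℚ) := by
    rw [hs, hm1, hm2, hm3]
    field_simp [MyAux.hp0Q (p := p)]
    push_cast
    ring
  obtain ⟨z, hz⟩ := MyAux.rat_int_of_norm_le_one s _ _ hmul hsn
  have hkey : (r1 : ℚ) + r2 = r3 + (z:ℚ) := by rw [← hz, hs]; ring
  rw [padicChar, padicChar, padicChar, ← Complex.exp_add, ← mul_add]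
  have hcast : ((r1:ℂ)) + (r2:ℂ) = (r3:ℂ) + ((z:ℤ):ℂ) := by exact_mod_cast hkey
  rw [hcast, mul_add, Complex.exp_add,
    show (2 * (Real.pi:ℂ) * Complex.I * ((z:ℤ):ℂ)) = ((z:ℤ):ℂ) * (2 * (Real.pi:ℂ) * Complex.I)
      from mul_comm _ _,
    Complex.exp_int_mul_two_pi_mul_I, mul_one]

lemma padicChar_eq_of_close {x y : ℚ_[p]} (h : ‖y - x‖ ≤ 1) : padicChar p y = padicChar p x := by
  have : padicChar p y = padicChar p (x + (y - x)) := by ring_nf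
  rw [this, padicChar_add, padicChar_eq_one h, mul_one]

lemma padicChar_continuous : Continuous (padicChar p) := by
  rw [continuous_iff_continuousAt]
  intro x
  have h : padicChar p =ᶠ[nhds x] fun _ => padicChar p x := by
    filter_upwards [Metric.closedBall_mem_nhds x one_pos] with z hz
    exact padicChar_eq_of_close (by simpa [dist_eq_norm] using hz)
  exact h.continuousAt

lemma padicChar_abs (x : ℚ_[p]) : ‖padicChar p x‖ = 1 := by
  rw [padicChar, Complex.norm_exp]
  have : (2 * ↑Real.pi * Complex.I * ((pFract p x : ℚ) : ℂ)).re = 0 := by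
    simp [Complex.mul_re, Complex.mul_im]
  rw [this, Real.exp_zero]

lemma padicChar_re_le_one (x : ℚ_[p]) : (padicChar p x).re ≤ 1 := by
  calc (padicChar p x).re ≤ ‖padicChar p x‖ := Complex.re_le_norm _
    _ = 1 := padicChar_abs x

lemma padicChar_ne_one {x : ℚ_[p]} (h : 1 < ‖x‖) : padicChar p x ≠ 1 := by
  obtain ⟨h0, h1, ⟨m, k, hmk⟩, hn⟩ := MyAux.pFract_spec x
  set r := pFract p x
  have hr0 : r ≠ 0 := by
    intro hr
    rw [hr] at hn
    push_cast at hn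
    rw [sub_zero] at hn
    exact absurd hn (not_le.2 h)
  intro hone
  rw [padicChar, Complex.exp_eq_one_iff] at hone
  obtain ⟨nn, hnn⟩ := hone
  have : ((r:ℚ):ℂ) = (nn:ℂ) := by
    have h2 : (2:ℂ) * Real.pi * Complex.I ≠ 0 := by
      exact mul_ne_zero (mul_ne_zero two_ne_zero
        (Complex.ofReal_ne_zero.2 Real.pi_ne_zero)) Complex.I_ne_zero
    apply mul_left_cancel₀ h2
    rw [hnn, mul_comm]
  have hrz : r = (nn : ℚ) := by exact_mod_cast this
  rw [hrz] at h0 h1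
  have : nn = 0 := by
    exact_mod_cast le_antisymm (by exact_mod_cast Int.lt_add_one_iff.1 (by exact_mod_cast h1))
      (by exact_mod_cast h0)
  rw [this] at hrz
  exact hr0 (by exact_mod_cast hrz)

section MeasSec
variable {p : ℕ} [Fact p.Prime] {n : ℕ}



lemma hp1R : (1:ℝ) < p := by exact_mod_cast (Fact.out : p.Prime).one_lt
lemma hpposR' : (0:ℝ) < p := lt_trans one_pos hp1R

lemma pinorm_add_le_max (x y : Fin n → ℚ_[p]) : ‖x + y‖ ≤ max ‖x‖ ‖y‖ := by
  apply pi_norm_le_iff_of_nonneg (le_max_of_le_left (norm_nonneg _)) |>.2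
  intro i
  exact (Padic.nonarchimedean _ _).trans
    (max_le_max (norm_le_pi_norm x i) (norm_le_pi_norm y i))

lemma pinorm_sub_le_max (x y : Fin n → ℚ_[p]) : ‖x - y‖ ≤ max ‖x‖ ‖y‖ := by
  rw [sub_eq_add_neg]
  simpa [norm_neg] using pinorm_add_le_max x (-y)

lemma norm_p_pow_inv (m : ℕ) : ‖(((p:ℚ_[p]))^m)⁻¹‖ = (p:ℝ)^m := by
  rw [norm_inv, norm_pow, Padic.norm_p, inv_pow, inv_inv]

lemma bset_measurable [MeasurableSpace (Fin n → ℚ_[p])] [BorelSpace (Fin n → ℚ_[p])] (r : ℝ) : MeasurableSet {x : Fin n → ℚ_[p] | ‖x‖ ≤ r} :=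
  (isClosed_le continuous_norm continuous_const).measurableSet

lemma sset_measurable [MeasurableSpace (Fin n → ℚ_[p])] [BorelSpace (Fin n → ℚ_[p])] (r : ℝ) : MeasurableSet {x : Fin n → ℚ_[p] | ‖x‖ = r} :=
  (isClosed_eq continuous_norm continuous_const).measurableSet

lemma ball_step [MeasurableSpace (Fin n → ℚ_[p])] [BorelSpace (Fin n → ℚ_[p])]
    (μ : Measure (Fin n → ℚ_[p])) [μ.IsAddHaarMeasure] (j : ℕ) :
    μ {x : Fin n → ℚ_[p] | ‖x‖ ≤ (p:ℝ)^(j+1)} = (p:ℝ≥0∞)^n * μ {x | ‖x‖ ≤ (p:ℝ)^j} := by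
  classical
  set B : Set (Fin n → ℚ_[p]) := {x | ‖x‖ ≤ (p:ℝ)^j} with hB
  have hBmeas : MeasurableSet B := bset_measurable _
  set t : (Fin n → Fin p) → (Fin n → ℚ_[p]) :=
    fun c i => ((c i : ℕ) : ℚ_[p]) * (((p:ℚ_[p]))^(j+1))⁻¹ with ht
  have htnorm : ∀ c i, ‖t c i‖ ≤ (p:ℝ)^(j+1) := by
    intro c i
    rw [ht]
    calc ‖((c i : ℕ) : ℚ_[p]) * (((p:ℚ_[p]))^(j+1))⁻¹‖
        = ‖((c i : ℕ) : ℚ_[p])‖ * (p:ℝ)^(j+1) := by rw [norm_mul, norm_p_pow_inv]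
      _ ≤ 1 * (p:ℝ)^(j+1) := by
          gcongr
          exact_mod_cast Padic.norm_int_le_one ((c i : ℕ) : ℤ)
      _ = (p:ℝ)^(j+1) := one_mul _
  set D : (Fin n → Fin p) → Set (Fin n → ℚ_[p]) := fun c => (fun x => x - t c) ⁻¹' B with hD
  have hDmeas : ∀ c, MeasurableSet (D c) := by
    intro c
    exact (measurable_id.sub_const (t c)) hBmeas
  have hDμ : ∀ c, μ (D c) = μ B := by
    intro c
    have : D c = (fun x => x + (-t c)) ⁻¹' B := by
      ext x; simp [hD, sub_eq_add_neg]
    rw [this, measure_preimage_add_right]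
  have hunion : ⋃ c, D c = {x : Fin n → ℚ_[p] | ‖x‖ ≤ (p:ℝ)^(j+1)} := by
    ext x
    simp only [Set.mem_iUnion, Set.mem_setOf_eq]
    constructor
    · rintro ⟨c, hc⟩
      have hx : ‖x - t c‖ ≤ (p:ℝ)^j := hc
      have : ‖x‖ = ‖(x - t c) + t c‖ := by ring_nf
      rw [this]
      refine (pinorm_add_le_max _ _).trans (max_le ?_ ?_)
      · exact hx.trans (pow_le_pow_right₀ hp1R.le (Nat.le_succ j))
      · apply pi_norm_le_iff_of_nonneg (by positivity) |>.2
        intro i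
        exact htnorm c i
    · intro hx
      have hzmem : ∀ i, ‖((p:ℚ_[p]))^(j+1) * x i‖ ≤ 1 := by
        intro i
        rw [norm_mul, norm_pow, Padic.norm_p]
        calc ((p:ℝ))⁻¹^(j+1) * ‖x i‖ ≤ ((p:ℝ))⁻¹^(j+1) * (p:ℝ)^(j+1) := by
              gcongr
              exact (norm_le_pi_norm x i).trans hx
          _ = 1 := by
              rw [← mul_pow, inv_mul_cancel₀ (ne_of_gt hpposR'), one_pow]
      set z : Fin n → ℤ_[p] := fun i => ⟨((p:ℚ_[p]))^(j+1) * x i, hzmem i⟩ with hz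
      refine ⟨fun i => ⟨(z i).appr 1, by simpa using (z i).appr_lt 1⟩, ?_⟩
      show ‖x - t _‖ ≤ (p:ℝ)^j
      apply pi_norm_le_iff_of_nonneg (by positivity) |>.2
      intro i
      have hpne : ((p:ℚ_[p]))^(j+1) ≠ 0 := by
        apply pow_ne_zero
        exact_mod_cast (Nat.cast_ne_zero (R := ℚ_[p])).2 (Fact.out : p.Prime).ne_zero
      have hrepr : (x - t (fun i => ⟨(z i).appr 1, by simpa using (z i).appr_lt 1⟩)) i
          = (((p:ℚ_[p]))^(j+1))⁻¹ * (((z i : ℤ_[p]) : ℚ_[p]) - ((z i).appr 1 : ℚ_[p])) := by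
        simp only [Pi.sub_apply, ht, hz]
        field_simp
      rw [hrepr, norm_mul, norm_p_pow_inv]
      have hspec := (z i).appr_spec 1
      rw [Ideal.mem_span_singleton] at hspec
      obtain ⟨d, hd⟩ := hspec
      have : ‖((z i : ℤ_[p]) : ℚ_[p]) - ((z i).appr 1 : ℚ_[p])‖ ≤ (p:ℝ)⁻¹ := by
        have h1 : ‖z i - ((z i).appr 1 : ℤ_[p])‖ ≤ (p:ℝ)⁻¹ := by
          rw [hd, pow_one, norm_mul, PadicInt.norm_p]
          calc (p:ℝ)⁻¹ * ‖d‖ ≤ (p:ℝ)⁻¹ * 1 := by gcongr; exact d.2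
            _ = (p:ℝ)⁻¹ := mul_one _
        rwa [← PadicInt.padic_norm_e_of_padicInt, PadicInt.coe_sub, PadicInt.coe_natCast] at h1
      calc (p:ℝ)^(j+1) * ‖((z i : ℤ_[p]) : ℚ_[p]) - ((z i).appr 1 : ℚ_[p])‖
          ≤ (p:ℝ)^(j+1) * (p:ℝ)⁻¹ := by gcongr
        _ = (p:ℝ)^j := by
            rw [pow_succ, mul_assoc, mul_inv_cancel₀ (ne_of_gt hpposR'), mul_one]
  have hdisj : Pairwise (Function.onFun Disjoint D) := by
    intro c c' hcc
    rw [Function.onFun, Set.disjoint_left]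
    intro x hxc hxc'
    apply hcc
    funext i
    have h1 : ‖x - t c‖ ≤ (p:ℝ)^j := hxc
    have h2 : ‖x - t c'‖ ≤ (p:ℝ)^j := hxc'
    have h3 : ‖t c - t c'‖ ≤ (p:ℝ)^j := by
      have : t c - t c' = (x - t c') - (x - t c) := by ring
      rw [this]
      exact (pinorm_sub_le_max _ _).trans (max_le h2 h1)
    have h4 : ‖(t c - t c') i‖ ≤ (p:ℝ)^j := (norm_le_pi_norm _ i).trans h3
    have h5 : (t c - t c') i
        = (((c i : ℕ) : ℤ) - ((c' i : ℕ) : ℤ) : ℤ) * (((p:ℚ_[p]))^(j+1))⁻¹ := by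
      simp only [Pi.sub_apply, ht]
      push_cast
      ring
    rw [h5, norm_mul, norm_p_pow_inv] at h4
    have h6 : ‖((((c i : ℕ) : ℤ) - ((c' i : ℕ) : ℤ) : ℤ) : ℚ_[p])‖ < 1 := by
      have hppos : (0:ℝ) < (p:ℝ)^(j+1) := pow_pos hpposR' _
      rw [← le_div_iff₀ hppos] at h4
      calc ‖((((c i : ℕ) : ℤ) - ((c' i : ℕ) : ℤ) : ℤ) : ℚ_[p])‖ ≤ (p:ℝ)^j / (p:ℝ)^(j+1) := h4
        _ = (p:ℝ)⁻¹ := by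
            rw [pow_succ, div_mul_eq_div_div, div_self (ne_of_gt (pow_pos hpposR' _)), one_div]
        _ < 1 := by rw [inv_lt_one_iff₀]; right; exact hp1R
    have h7 := Padic.norm_intCast_lt_one_iff.1 h6
    have h8 : (((c i : ℕ) : ℤ) - ((c' i : ℕ) : ℤ)) = 0 := by
      apply Int.eq_zero_of_abs_lt_dvd h7
      have hci := (c i).2
      have hci' := (c' i).2
      rw [abs_lt]
      omega
    have : (c i : ℕ) = (c' i : ℕ) := by omega
    exact Fin.ext this
  rw [← hunion, measure_iUnion hdisj hDmeas]
  rw [tsum_fintype]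
  simp only [hDμ]
  rw [Finset.sum_const, Finset.card_univ]
  rw [Fintype.card_pi]
  simp only [Fintype.card_fin, Finset.prod_const, Finset.card_univ, Fintype.card_fin]
  rw [nsmul_eq_mul]
  push_cast
  ring

lemma ball_meas [MeasurableSpace (Fin n → ℚ_[p])] [BorelSpace (Fin n → ℚ_[p])]
    (μ : Measure (Fin n → ℚ_[p])) [μ.IsAddHaarMeasure]
    (hμ : μ {x : Fin n → ℚ_[p] | ‖x‖ ≤ 1} = 1) (j : ℕ) :
    μ {x : Fin n → ℚ_[p] | ‖x‖ ≤ (p:ℝ)^j} = (p:ℝ≥0∞)^(j*n) := by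
  induction j with
  | zero => simpa using hμ
  | succ j ih =>
    rw [ball_step, ih, ← pow_add]
    congr 1
    ring

lemma char_integral_zero [MeasurableSpace (Fin n → ℚ_[p])] [BorelSpace (Fin n → ℚ_[p])]
    (μ : Measure (Fin n → ℚ_[p])) [μ.IsAddHaarMeasure] (hn : 0 < n)
    (ξ : Fin n → ℚ_[p]) (N : ℕ) (hξ : ‖ξ‖ = (p:ℝ)^(-(N:ℤ)))
    (j : ℕ) (hj : N + 1 ≤ j) :
    ∫ x in {x : Fin n → ℚ_[p] | ‖x‖ ≤ (p:ℝ)^j}, padicChar p (∑ i, ξ i * x i) ∂μ = 0 := by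
  classical
  have : Nonempty (Fin n) := ⟨⟨0, hn⟩⟩
  obtain ⟨i₀, -, hi₀⟩ := Finset.exists_mem_eq_sup (Finset.univ : Finset (Fin n))
    Finset.univ_nonempty (fun i => ‖ξ i‖₊)
  have hi₀n : ‖ξ i₀‖ = (p:ℝ)^(-(N:ℤ)) := by
    have h' : ‖ξ‖₊ = ‖ξ i₀‖₊ := by rw [Pi.nnnorm_def]; exact hi₀
    have h'' : ‖ξ‖ = ‖ξ i₀‖ := congrArg NNReal.toReal h'
    rw [← h'', hξ]
  have hξi0 : ξ i₀ ≠ 0 := by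
    intro h
    rw [h, norm_zero] at hi₀n
    exact absurd hi₀n.symm (ne_of_gt (zpow_pos hpposR' _))
  set v : ℚ_[p] := (ξ i₀)⁻¹ * ((p:ℚ_[p]))⁻¹ with hv
  set x₀ : Fin n → ℚ_[p] := Pi.single i₀ v with hx₀
  set B : Set (Fin n → ℚ_[p]) := {x | ‖x‖ ≤ (p:ℝ)^j} with hB
  have hvnorm : ‖v‖ = (p:ℝ)^(N+1) := by
    rw [hv, norm_mul, norm_inv, norm_inv, hi₀n, Padic.norm_p, inv_inv, zpow_neg, inv_inv,
      zpow_natCast, pow_succ]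
  have hx₀norm : ‖x₀‖ ≤ (p:ℝ)^j := by
    apply pi_norm_le_iff_of_nonneg (by positivity) |>.2
    intro i
    rw [hx₀, Pi.single_apply]
    split
    · rw [hvnorm]; exact pow_le_pow_right₀ hp1R.le hj
    · rw [norm_zero]; positivity
  have hfx₀ : ∑ i, ξ i * x₀ i = ((p:ℚ_[p]))⁻¹ := by
    rw [Finset.sum_eq_single i₀]
    · rw [hx₀, Pi.single_eq_same, hv, ← mul_assoc, mul_inv_cancel₀ hξi0, one_mul]
    · intro b _ hb
      rw [hx₀, Pi.single_eq_of_ne hb, mul_zero]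
    · intro h
      exact absurd (Finset.mem_univ i₀) h
  have hpre : (fun x => x + x₀) ⁻¹' B = B := by
    ext x
    simp only [Set.mem_preimage, hB, Set.mem_setOf_eq]
    constructor
    · intro h
      have : x = (x + x₀) - x₀ := by ring
      rw [this]
      exact (pinorm_sub_le_max _ _).trans (max_le h hx₀norm)
    · intro h
      exact (pinorm_add_le_max _ _).trans (max_le h hx₀norm)
  have hBmeas : MeasurableSet B := bset_measurable _
  have hmapped : μ.restrict B = (μ.restrict B).map (· + x₀) := by
    have h := Measure.restrict_map (measurable_add_const x₀) hBmeas (μ := μ)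
    rw [map_add_right_eq_self, hpre] at h
    exact h
  have hcont : Continuous fun x : Fin n → ℚ_[p] => padicChar p (∑ i, ξ i * x i) :=
    padicChar_continuous.comp (continuous_finset_sum _ fun i _ => continuous_const.mul
      (continuous_apply i))
  set c : ℂ := padicChar p ((p:ℚ_[p]))⁻¹ with hc
  have hcne : c ≠ 1 := by
    apply padicChar_ne_one
    rw [norm_inv, Padic.norm_p, inv_inv]
    exact hp1R
  have hshift : ∀ x : Fin n → ℚ_[p],
      padicChar p (∑ i, ξ i * (x + x₀) i) = c * padicChar p (∑ i, ξ i * x i) := by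
    intro x
    have : ∑ i, ξ i * (x + x₀) i = (∑ i, ξ i * x i) + ∑ i, ξ i * x₀ i := by
      rw [← Finset.sum_add_distrib]
      exact Finset.sum_congr rfl fun i _ => by rw [Pi.add_apply, mul_add]
    rw [this, hfx₀, padicChar_add, mul_comm]
  set I := ∫ x in B, padicChar p (∑ i, ξ i * x i) ∂μ with hI
  have h1 : I = c * I := by
    conv_lhs => rw [hI, hmapped]
    rw [integral_map (measurable_add_const x₀).aemeasurable hcont.aestronglyMeasurable]
    simp_rw [hshift]
    rw [integral_const_mul]
  have h2 : (1 - c) * I = 0 := by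
    rw [sub_mul, one_mul]
    rw [← h1]
    ring
  rcases mul_eq_zero.1 h2 with h | h
  · exact absurd (by linear_combination -h : c = 1) hcne
  · exact h

end MeasSec

section MainSec
variable {p : ℕ} [Fact p.Prime] {n : ℕ}

lemma padic_norm_sum_le {ι : Type*} (s : Finset ι) (h : ι → ℚ_[p]) (C : ℝ) (hC : 0 ≤ C)
    (hb : ∀ i ∈ s, ‖h i‖ ≤ C) : ‖∑ i ∈ s, h i‖ ≤ C := by
  classical
  induction s using Finset.induction with
  | empty => simpa using hC
  | insert _ _ hx ih =>
    rw [Finset.sum_insert hx]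
    exact (Padic.nonarchimedean _ _).trans (max_le (hb _ (Finset.mem_insert_self _ _))
      (ih fun i hi => hb i (Finset.mem_insert_of_mem hi)))

/-- For a nonnegative even probability density `a` on `ℚ_p^n`, with
`A_j = sup_{‖x‖ = p^j} a(x)`, one has `0 ≤ 1 - â(ξ) ≤ ∑_{j=N+1}^∞ p^{jn} A_j`
for every `ξ` with `‖ξ‖ = p^{-N}`, `N ≥ 0`, where `â(ξ) = ∫ χ(ξ·x) a(x) d^n x`. -/
theorem padic_one_sub_fourier_bound (p : ℕ) [Fact p.Prime] (n : ℕ) (hn : 0 < n)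
    [MeasurableSpace (Fin n → ℚ_[p])] [BorelSpace (Fin n → ℚ_[p])]
    (μ : Measure (Fin n → ℚ_[p])) [μ.IsAddHaarMeasure]
    (hμ : μ {x : Fin n → ℚ_[p] | ‖x‖ ≤ 1} = 1)
    (a : (Fin n → ℚ_[p]) → ℝ) (ha_nonneg : ∀ x, 0 ≤ a x)
    (ha_even : ∀ x, a (-x) = a x) (ha_int : Integrable a μ)
    (ha_one : ∫ x, a x ∂μ = 1)
    (A : ℤ → ℝ≥0∞)
    (hA : ∀ j : ℤ, A j = ⨆ x ∈ {x : Fin n → ℚ_[p] | ‖x‖ = (p : ℝ) ^ j}, ENNReal.ofReal (a x))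
    (ξ : Fin n → ℚ_[p]) (N : ℕ) (hξ : ‖ξ‖ = (p : ℝ) ^ (-(N : ℤ))) :
    0 ≤ 1 - (∫ x, padicChar p (∑ i, ξ i * x i) * (a x : ℂ) ∂μ).re ∧
    ENNReal.ofReal (1 - (∫ x, padicChar p (∑ i, ξ i * x i) * (a x : ℂ) ∂μ).re) ≤
      ∑' k : ℕ, (p : ℝ≥0∞) ^ (((N : ℤ) + 1 + k) * (n : ℤ)) * A ((N : ℤ) + 1 + k) := by
  classical
  set f : (Fin n → ℚ_[p]) → ℚ_[p] := fun x => ∑ i, ξ i * x i with hf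
  have hcontf : Continuous f :=
    continuous_finset_sum _ fun i _ => continuous_const.mul (continuous_apply i)
  have hcontχ : Continuous fun x => padicChar p (f x) := padicChar_continuous.comp hcontf
  have hχbd : ∀ x, ‖padicChar p (f x)‖ ≤ 1 := fun x => by
    rw [padicChar_abs]
  have hint : Integrable (fun x => padicChar p (f x) * (a x : ℂ)) μ :=
    (ha_int.ofReal).bdd_mul hcontχ.aestronglyMeasurable (c := 1) (Filter.Eventually.of_forall hχbd)
  set g : (Fin n → ℚ_[p]) → ℝ := fun x => 1 - (padicChar p (f x)).re with hg
  have hgcont : Continuous g := continuous_const.sub (Complex.continuous_re.comp hcontχ)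
  have hgnonneg : ∀ x, 0 ≤ g x := fun x => sub_nonneg.2 (padicChar_re_le_one _)
  have hgbd : ∀ x, ‖g x‖ ≤ 2 := by
    intro x
    rw [Real.norm_eq_abs]
    have h1 : |(padicChar p (f x)).re| ≤ 1 := by
      calc |(padicChar p (f x)).re| ≤ ‖padicChar p (f x)‖ :=
            Complex.abs_re_le_norm _
        _ = 1 := padicChar_abs _
    rw [abs_sub_comm]
    calc |(padicChar p (f x)).re - 1| ≤ |(padicChar p (f x)).re| + |(1:ℝ)| := abs_sub _ _
      _ ≤ 1 + 1 := by rw [abs_one]; gcongr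
      _ = 2 := by norm_num
  have hre : (∫ x, padicChar p (f x) * (a x:ℂ) ∂μ).re
      = ∫ x, (padicChar p (f x)).re * a x ∂μ := by
    have h0 := integral_re hint
    simp only [RCLike.re_to_complex] at h0
    rw [← h0]
    congr 1
    ext x
    simp [Complex.mul_re]
  have hmeasre : AEStronglyMeasurable (fun x => (padicChar p (f x)).re) μ :=
    (Complex.continuous_re.comp hcontχ).aestronglyMeasurable
  have hintre : Integrable (fun x => (padicChar p (f x)).re * a x) μ :=
    ha_int.bdd_mul hmeasre (c := 1) (Filter.Eventually.of_forall fun x => by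
      rw [Real.norm_eq_abs]
      exact (Complex.abs_re_le_norm _).trans (le_of_eq (padicChar_abs _)))
  have hle : ∫ x, (padicChar p (f x)).re * a x ∂μ ≤ 1 := by
    rw [← ha_one]
    exact integral_mono hintre ha_int fun x =>
      mul_le_of_le_one_left (ha_nonneg x) (padicChar_re_le_one _)
  have hmain : 1 - (∫ x, padicChar p (f x) * (a x:ℂ) ∂μ).re = ∫ x, g x * a x ∂μ := by
    rw [hre, show (fun x => g x * a x) = fun x => a x - (padicChar p (f x)).re * a x from by
      funext x; rw [hg]; ring, integral_sub ha_int hintre, ha_one]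
  have hprod_int : Integrable (fun x => g x * a x) μ :=
    ha_int.bdd_mul hgcont.aestronglyMeasurable (c := 2) (Filter.Eventually.of_forall hgbd)
  refine ⟨by rw [hre]; linarith, ?_⟩
  have hofReal : ENNReal.ofReal (1 - (∫ x, padicChar p (f x) * (a x:ℂ) ∂μ).re)
      = ∫⁻ x, ENNReal.ofReal (g x * a x) ∂μ := by
    rw [hmain]
    exact ofReal_integral_eq_lintegral_ofReal hprod_int
      (Filter.Eventually.of_forall fun x => mul_nonneg (hgnonneg x) (ha_nonneg x))
  rw [hofReal]
  set BN : Set (Fin n → ℚ_[p]) := {x | ‖x‖ ≤ (p:ℝ)^(N:ℕ)} with hBN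
  have hBNmeas : MeasurableSet BN := bset_measurable _
  have hzero : ∀ x ∈ BN, g x * a x = 0 := by
    intro x hx
    have hfx : ‖f x‖ ≤ 1 := by
      apply padic_norm_sum_le _ _ _ zero_le_one
      intro i _
      rw [norm_mul]
      calc ‖ξ i‖ * ‖x i‖ ≤ (p:ℝ)^(-(N:ℤ)) * (p:ℝ)^(N:ℕ) := by
            refine mul_le_mul ?_ ?_ (norm_nonneg _) (le_of_lt (zpow_pos hpposR' _))
            · rw [← hξ]; exact norm_le_pi_norm ξ i
            · exact (norm_le_pi_norm x i).trans hx
        _ = 1 := by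
            rw [← zpow_natCast (p:ℝ) N, ← zpow_add₀ (ne_of_gt hpposR')]
            simp
    have : padicChar p (f x) = 1 := padicChar_eq_one hfx
    rw [hg]
    simp [this]
  have hsplit : ∫⁻ x, ENNReal.ofReal (g x * a x) ∂μ
      = ∫⁻ x in BNᶜ, ENNReal.ofReal (g x * a x) ∂μ := by
    rw [← lintegral_add_compl (fun x => ENNReal.ofReal (g x * a x)) hBNmeas]
    have hz : ∫⁻ x in BN, ENNReal.ofReal (g x * a x) ∂μ = 0 := by
      apply le_antisymm _ zero_le
      calc ∫⁻ x in BN, ENNReal.ofReal (g x * a x) ∂μ ≤ ∫⁻ _ in BN, 0 ∂μ := by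
            apply lintegral_mono_ae
            rw [ae_restrict_iff' hBNmeas]
            filter_upwards with x hx
            rw [hzero x hx]
            simp
        _ = 0 := by simp
    rw [hz, zero_add]
  rw [hsplit]
  set S : ℕ → Set (Fin n → ℚ_[p]) := fun k => {x | ‖x‖ = (p:ℝ)^(N+1+k : ℕ)} with hS
  have hcover : BNᶜ = ⋃ k, S k := by
    ext x
    simp only [Set.mem_compl_iff, hBN, Set.mem_setOf_eq, Set.mem_iUnion, hS, not_le]
    constructor
    · intro hx
      have hx0 : x ≠ 0 := by
        intro h
        rw [h, norm_zero] at hx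
        exact absurd hx (not_lt.2 (by positivity))
      have : Nonempty (Fin n) := ⟨⟨0, hn⟩⟩
      obtain ⟨i₀, -, hi₀⟩ := Finset.exists_mem_eq_sup (Finset.univ : Finset (Fin n))
        Finset.univ_nonempty (fun i => ‖x i‖₊)
      have hx' : ‖x‖₊ = ‖x i₀‖₊ := by rw [Pi.nnnorm_def]; exact hi₀
      have hxi : ‖x‖ = ‖x i₀‖ := congrArg NNReal.toReal hx'
      have hxi0 : x i₀ ≠ 0 := by
        intro h
        rw [hxi, h, norm_zero] at hx
        exact absurd hx (not_lt.2 (by positivity))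
      obtain ⟨m, hm⟩ : ∃ m : ℤ, ‖x‖ = (p:ℝ)^m :=
        ⟨-(x i₀).valuation, by rw [hxi]; exact Padic.norm_eq_zpow_neg_valuation hxi0⟩
      have hmN : (N:ℤ) < m := by
        by_contra hcon
        push_neg at hcon
        rw [hm] at hx
        have : (p:ℝ)^m ≤ (p:ℝ)^(N:ℤ) := zpow_le_zpow_right₀ hp1R.le hcon
        rw [← zpow_natCast (p:ℝ) N] at hx
        exact absurd (lt_of_lt_of_le hx this) (lt_irrefl _)
      refine ⟨(m - (N+1)).toNat, ?_⟩
      rw [hm]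
      rw [← zpow_natCast (p:ℝ) (N+1+(m - (N+1)).toNat)]
      congr 1
      push_cast
      rw [Int.toNat_of_nonneg (by omega)]
      ring
    · rintro ⟨k, hk⟩
      rw [hk]
      exact pow_lt_pow_right₀ hp1R (by omega)
  rw [hcover]
  refine le_trans (lintegral_iUnion_le _ _) (ENNReal.tsum_le_tsum fun k => ?_)
  -- per sphere bound
  set j : ℕ := N + 1 + k with hj
  set Bj : Set (Fin n → ℚ_[p]) := {x | ‖x‖ ≤ (p:ℝ)^(j:ℕ)} with hBj
  have hBjmeas : MeasurableSet Bj := bset_measurable _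
  have hSmeas : MeasurableSet (S k) := sset_measurable _
  have hBjval : μ Bj = (p:ℝ≥0∞)^(j*n) := ball_meas μ hμ j
  have hBjfin : μ Bj ≠ ⊤ := by
    rw [hBjval]
    exact ENNReal.pow_ne_top (ENNReal.natCast_ne_top p)
  have hSsub : S k ⊆ Bj := fun x hx => le_of_eq hx
  have hgBj : IntegrableOn g Bj μ :=
    Measure.integrableOn_of_bounded hBjfin hgcont.aestronglyMeasurable
      (Filter.Eventually.of_forall hgbd)
  have hχBj : IntegrableOn (fun x => padicChar p (f x)) Bj μ :=
    Measure.integrableOn_of_bounded hBjfin hcontχ.aestronglyMeasurable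
      (Filter.Eventually.of_forall hχbd)
  have hreBj : ∫ x in Bj, (padicChar p (f x)).re ∂μ = 0 := by
    have h1 := integral_re hχBj
    simp only [RCLike.re_to_complex] at h1
    rw [h1, char_integral_zero μ hn ξ N hξ j (by omega), Complex.zero_re]
  have hintBj : ∫ x in Bj, g x ∂μ = (μ Bj).toReal := by
    have hconst : IntegrableOn (fun _ : Fin n → ℚ_[p] => (1:ℝ)) Bj μ :=
      integrableOn_const hBjfin
    have hgr : (∫ x in Bj, g x ∂μ)
        = ∫ x in Bj, ((1:ℝ) - (padicChar p (f x)).re) ∂μ := rfl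
    have h2 := integral_sub hconst hχBj.re
    simp only [RCLike.re_to_complex] at h2
    rw [hgr, h2, hreBj, sub_zero, setIntegral_const, smul_eq_mul, mul_one]; rfl
  have hSle : ∫⁻ x in S k, ENNReal.ofReal (g x) ∂μ ≤ μ Bj := by
    have h1 : ∫⁻ x in S k, ENNReal.ofReal (g x) ∂μ = ENNReal.ofReal (∫ x in S k, g x ∂μ) :=
      (ofReal_integral_eq_lintegral_ofReal (hgBj.mono_set hSsub)
        (Filter.Eventually.of_forall hgnonneg)).symm
    rw [h1]
    calc ENNReal.ofReal (∫ x in S k, g x ∂μ)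
        ≤ ENNReal.ofReal (∫ x in Bj, g x ∂μ) := by
          apply ENNReal.ofReal_le_ofReal
          exact setIntegral_mono_set hgBj (Filter.Eventually.of_forall hgnonneg)
            (HasSubset.Subset.eventuallyLE hSsub)
      _ = μ Bj := by rw [hintBj, ENNReal.ofReal_toReal hBjfin]
  have hAle : ∀ x ∈ S k, ENNReal.ofReal (a x) ≤ A ((N:ℤ)+1+k) := by
    intro x hx
    rw [hA]
    have hx' : x ∈ {x : Fin n → ℚ_[p] | ‖x‖ = (p:ℝ)^((N:ℤ)+1+k)} := by
      show ‖x‖ = (p:ℝ)^((N:ℤ)+1+k)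
      rw [hx, ← zpow_natCast (p:ℝ) (N+1+k)]
      norm_num
    exact le_iSup₂ (f := fun x _ => ENNReal.ofReal (a x)) x hx'
  have hpow : (p:ℝ≥0∞)^(j*n) = (p:ℝ≥0∞)^(((N:ℤ)+1+k)*(n:ℤ)) := by
    rw [show (((N:ℤ)+1+k)*(n:ℤ)) = ((j*n : ℕ) : ℤ) from by push_cast [hj]; ring, zpow_natCast]
  calc ∫⁻ x in S k, ENNReal.ofReal (g x * a x) ∂μ
      = ∫⁻ x in S k, ENNReal.ofReal (g x) * ENNReal.ofReal (a x) ∂μ := by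
        congr 1
        funext x
        rw [ENNReal.ofReal_mul (hgnonneg x)]
    _ ≤ ∫⁻ x in S k, ENNReal.ofReal (g x) * A ((N:ℤ)+1+k) ∂μ := by
        apply lintegral_mono_ae
        rw [ae_restrict_iff' hSmeas]
        filter_upwards with x hx
        exact mul_le_mul_right (hAle x hx) _
    _ = (∫⁻ x in S k, ENNReal.ofReal (g x) ∂μ) * A ((N:ℤ)+1+k) :=
        lintegral_mul_const _ (ENNReal.measurable_ofReal.comp hgcont.measurable)
    _ ≤ μ Bj * A ((N:ℤ)+1+k) := mul_le_mul_left hSle _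
    _ = (p:ℝ≥0∞) ^ (((N : ℤ) + 1 + k) * (n : ℤ)) * A ((N : ℤ) + 1 + k) := by
        rw [hBjval, hpow]

end MainSec

end CharSec
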